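/- Let e ≥ 2, let μ be a partition of e-weight w, let j be a residue class modulo e, and put k = ε_j(μ) and l = φ_j(μ). Then the partition Ẽ_j^k μ obtained from μ by removing all k of its j-normal nodes has e-weight exactly w − k·l. -/

import Mathlib

/-- A partition: a weakly decreasing function `parts : ℕ → ℕ` (0-indexed),
having exactly `len` nonzero parts. -/
structure AbacusPartition where
  parts : ℕ → ℕ
  antitone : Antitone parts
  len : ℕ
  pos_of_lt : ∀ i, i < len → 0 < parts i
  zero_of_ge : ∀ i, len ≤ i → parts i = 0

/-- The beta-set (abacus display) of a partition with `r` beads: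
positions `λ_i + r - i` for `1 ≤ i ≤ r` (0-indexed: `parts i + (r - 1 - i)`). -/
def AbacusPartition.betaSet (lam : AbacusPartition) (r : ℕ) : Finset ℕ :=
  (Finset.range r).image (fun i => lam.parts i + (r - 1 - i))

/-- e-weight of the bead at position `p` of the display `B`: the number of
unoccupied positions `q < p` with `q ≡ p (mod e)`. -/
def beadWeight (e : ℕ) (B : Finset ℕ) (p : ℕ) : ℕ :=
  ((Finset.range p).filter (fun q => q % e = p % e ∧ q ∉ B)).card

/-- Total e-weight of the display `B`. -/
def abacusWeight (e : ℕ) (B : Finset ℕ) : ℕ :=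
  B.sum (fun p => beadWeight e B p)

/-- e-weight of a partition (computed from the display with `lam.len` beads). -/
def eWeight (e : ℕ) (lam : AbacusPartition) : ℕ :=
  abacusWeight e (lam.betaSet lam.len)

/-- Positions on runner `res` (positions `p` with `p % e = res`), in increasing
order, up to a bound strictly beyond every bead. -/
def posList (e : ℕ) (B : Finset ℕ) (res : ℕ) : List ℕ :=
  (List.range (B.sup id + e + 2)).filter (fun p => p % e == res)

/-- One step of the signature-reduction automaton; the state is
`(list of surviving '+' positions, stack of pending '−' positions)`.
A '−' occurs at `p` when `p` is occupied and its preceding position unoccupied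
(position `-1` counts as occupied); a '+' occurs at `p` when `p` is unoccupied
and its preceding position occupied.  A '+' cancels the most recent pending '−'. -/
def signStep (B : Finset ℕ) (st : List ℕ × List ℕ) (p : ℕ) : List ℕ × List ℕ :=
  if p ∈ B ∧ ¬(p = 0 ∨ p - 1 ∈ B) then (st.1, p :: st.2)
  else if p ∉ B ∧ (p = 0 ∨ p - 1 ∈ B) then
    (match st.2 with
     | [] => (p :: st.1, ([] : List ℕ))
     | _ :: tl => (st.1, tl))
  else st

/-- Final state of the reduction of the `j`-signature on runner `res`:
`(surviving '+' (conormal) positions, surviving '−' (normal) positions)`,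
each list in decreasing order of position. -/
def signState (e : ℕ) (B : Finset ℕ) (res : ℕ) : List ℕ × List ℕ :=
  (posList e B res).foldl (signStep B) ([], [])

/-- Positions of the normal beads on runner `res`, in decreasing order. -/
def normalList (e : ℕ) (B : Finset ℕ) (res : ℕ) : List ℕ := (signState e B res).2

/-- The conormal positions on runner `res`, in decreasing order. -/
def conormalList (e : ℕ) (B : Finset ℕ) (res : ℕ) : List ℕ := (signState e B res).1

/-- ε: the number of normal beads on runner `res`. -/
def epsB (e : ℕ) (B : Finset ℕ) (res : ℕ) : ℕ := (normalList e B res).length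

/-- φ: the number of conormal positions on runner `res`. -/
def phiB (e : ℕ) (B : Finset ℕ) (res : ℕ) : ℕ := (conormalList e B res).length

/-- ε_j of a partition: in the display with `lam.len` beads, residue `j`
is carried by runner `(j + lam.len) % e`. -/
def epsP (e : ℕ) (lam : AbacusPartition) (j : ℕ) : ℕ :=
  epsB e (lam.betaSet lam.len) ((j + lam.len) % e)

/-- φ_j of a partition. -/
def phiP (e : ℕ) (lam : AbacusPartition) (j : ℕ) : ℕ :=
  phiB e (lam.betaSet lam.len) ((j + lam.len) % e)

/-- Move each bead in `ps` from its position `p` to `p - 1`. -/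
def moveDown (B : Finset ℕ) (ps : List ℕ) : Finset ℕ :=
  ps.foldl (fun C p => insert (p - 1) (C.erase p)) B

/-- For each position `p` in `ps`, move the bead at `p - 1` to `p`. -/
def moveUp (B : Finset ℕ) (ps : List ℕ) : Finset ℕ :=
  ps.foldl (fun C p => insert p (C.erase (p - 1))) B

/-- Ẽ^t on displays: move the `t` normal beads at the smallest positions down. -/
def Etil (e : ℕ) (B : Finset ℕ) (res t : ℕ) : Finset ℕ :=
  moveDown B ((normalList e B res).reverse.take t)

/-- F̃^t on displays: for the `t` largest conormal positions `p`,
move the bead at `p - 1` to `p`. -/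
def Ftil (e : ℕ) (B : Finset ℕ) (res t : ℕ) : Finset ℕ :=
  moveUp B ((conormalList e B res).take t)

/-- Number of beads of `B` on runner `i`. -/
def runnerCount (e : ℕ) (B : Finset ℕ) (i : ℕ) : ℕ :=
  (B.filter (fun p => p % e = i)).card

/-- Sum of the e-weights of the beads of `B` on runner `i` (this is `|λ(i)|`). -/
def runnerWeight (e : ℕ) (B : Finset ℕ) (i : ℕ) : ℕ :=
  (B.filter (fun p => p % e = i)).sum (beadWeight e B)

/-- The display of the e-core: slide every bead as far up its runner as possible. -/
def coreBeta (e : ℕ) (B : Finset ℕ) : Finset ℕ :=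
  (Finset.range e).biUnion
    (fun i => (Finset.range (runnerCount e B i)).image (fun m => i + m * e))

/-- `lam` lies in the block with bead counts `bd 0, …, bd (e-1)` and e-weight `w`:
displayed with `r = bd 0 + ⋯ + bd (e-1)` beads it has `bd i` beads on runner `i`
and e-weight `w`. -/
def inBlock (e : ℕ) (bd : ℕ → ℕ) (w : ℕ) (lam : AbacusPartition) : Prop :=
  lam.len ≤ (Finset.range e).sum bd ∧
  (∀ i < e, runnerCount e (lam.betaSet ((Finset.range e).sum bd)) i = bd i) ∧
  abacusWeight e (lam.betaSet ((Finset.range e).sum bd)) = w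

/-- The single-runner beta-set of the partition with parts `ρ` and `c` beads. -/
def oneRunnerBeta (rho : List ℕ) (c : ℕ) : Finset ℕ :=
  (Finset.range c).image (fun t => rho.getD t 0 + (c - 1 - t))

/-- The display of the partition `⟨0_{lamOf 0}, …, (e−1)_{lamOf (e−1)} | bd 0, …, bd (e−1)⟩`. -/
def display (e : ℕ) (bd : ℕ → ℕ) (lamOf : ℕ → List ℕ) : Finset ℕ :=
  (Finset.range e).biUnion
    (fun i => (oneRunnerBeta (lamOf i) (bd i)).image (fun m => i + m * e))

/-- The operator Ḟ at runner `res`: apply F̃^{φ} (valid when ε = 0 < φ). -/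
def dotF (e : ℕ) (B : Finset ℕ) (res : ℕ) : Finset ℕ := Ftil e B res (phiB e B res)

/-- Apply a chain of Ḟ steps. -/
def chainFold (e : ℕ) : Finset ℕ → List ℕ → Finset ℕ
  | B, [] => B
  | B, i :: rest => chainFold e (dotF e B i) rest

/-- The chain of Ḟ steps is semisimple: at each step ε = 0 before, φ > 0 before,
and φ = 0 afterwards. -/
def validChain (e : ℕ) : Finset ℕ → List ℕ → Prop
  | _, [] => True
  | B, i :: rest =>
      (epsB e B i = 0 ∧ 0 < phiB e B i ∧ phiB e (dotF e B i) i = 0) ∧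
      validChain e (dotF e B i) rest

/-- `B` induces semisimply to `C` (displays with the same number of beads). -/
def InducesSS (e : ℕ) (B C : Finset ℕ) : Prop :=
  ∃ L : List ℕ, validChain e B L ∧ chainFold e B L = C

/-- Re-display a beta-set with `s` additional beads. -/
def shiftBeta (B : Finset ℕ) (s : ℕ) : Finset ℕ :=
  B.image (· + s) ∪ Finset.range s

/-- `B` induces semisimply to the partition displayed by `C` (where `C` may use a
different number of beads). -/
def InducesToPartition (e : ℕ) (B C : Finset ℕ) : Prop :=
  ∃ D : Finset ℕ, InducesSS e B D ∧ shiftBeta D C.card = shiftBeta C D.card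

/-- The block with bead counts `bd` and weight `w` is Rouquier:
for all `i < j < e`, `bd i − bd j ≥ w` or `bd j − bd i ≥ w − 1`. -/
def IsRouquier (e w : ℕ) (bd : ℕ → ℕ) : Prop :=
  ∀ i j, i < j → j < e → bd j + w ≤ bd i ∨ bd i + (w - 1) ≤ bd j

/-- `lam` is e-singular: it has `e` consecutive equal nonzero parts. -/
def ESingular (e : ℕ) (lam : AbacusPartition) : Prop :=
  ∃ i, lam.parts i ≠ 0 ∧ ∀ m < e, lam.parts (i + m) = lam.parts i

/-- `lam` is e-regular. -/
def ERegular (e : ℕ) (lam : AbacusPartition) : Prop := ¬ ESingular e lam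

/-- The induced e-sequence of the display `B`, as a multiset: each bead of
positive weight `w` at position `p` contributes `p, p−e, …, p−(w−1)e`. -/
def inducedSeq (e : ℕ) (B : Finset ℕ) : Multiset ℕ :=
  B.val.bind (fun p => (Multiset.range (beadWeight e B p)).map (fun m => p - m * e))

/-- The product order: `lam ≤_P mu` iff they have the same e-core and e-weight and
`s(mu)_r ≥ s(lam)_r` componentwise for all sufficiently large `r`. -/
def ProdLE (e : ℕ) (lam mu : AbacusPartition) : Prop :=
  (∃ r, lam.len ≤ r ∧ mu.len ≤ r ∧
    coreBeta e (lam.betaSet r) = coreBeta e (mu.betaSet r)) ∧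
  eWeight e lam = eWeight e mu ∧
  ∃ r0, ∀ r, r0 ≤ r →
    List.Forall₂ (· ≤ ·) ((inducedSeq e (lam.betaSet r)).sort (· ≤ ·))
      ((inducedSeq e (mu.betaSet r)).sort (· ≤ ·))


section Helpers
variable {e : ℕ}

lemma choose2_succ (n : ℕ) : (n+1).choose 2 = n.choose 2 + n := by
  have h := Nat.choose_succ_succ n 1
  norm_num at h
  omega

lemma choose2_add (x y : ℕ) : (x+y).choose 2 = x.choose 2 + y.choose 2 + x*y := by
  induction y with
  | zero => simp
  | succ n ih =>
      rw [show x + (n+1) = (x+n)+1 by omega, choose2_succ, ih, choose2_succ, Nat.mul_succ]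
      omega

lemma ipred_val (he : 1 ≤ e) {i : ℕ} (hi : i < e) :
    (i + e - 1) % e = if i = 0 then e - 1 else i - 1 := by
  split_ifs with h
  · subst h; simp
  · have h2 : i + e - 1 = (i-1) + e := by omega
    rw [h2, Nat.add_mod_right]
    exact Nat.mod_eq_of_lt (by omega)

lemma succ_mod_eq (he : 2 ≤ e) {i q : ℕ} (hi : i < e) (hq : q % e = (i + e - 1) % e) :
    (q + 1) % e = i := by
  rw [ipred_val (by omega) hi] at hq
  have h1 : (q+1) % e = (q % e + 1 % e) % e := Nat.add_mod q 1 e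
  rw [Nat.mod_eq_of_lt (show 1 < e by omega)] at h1
  split_ifs at hq with h
  · rw [h1, hq, Nat.sub_add_cancel (show 1 ≤ e by omega), Nat.mod_self, h]
  · rw [h1, hq, Nat.sub_add_cancel (show 1 ≤ i by omega)]
    exact Nat.mod_eq_of_lt hi

lemma pred_mod_eq (he : 2 ≤ e) {i p : ℕ} (hi : i < e) (hp : p % e = i) (hp0 : p ≠ 0) :
    (p - 1) % e = (i + e - 1) % e := by
  rw [ipred_val (by omega) hi]
  have hd : e * (p / e) + p % e = p := Nat.div_add_mod p e
  rw [hp] at hd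
  split_ifs with h
  · subst h
    rw [Nat.add_zero] at hd
    have ht : p / e ≠ 0 := by rintro h0; rw [h0, Nat.mul_zero] at hd; exact hp0 hd.symm
    have h2 : e * (p/e - 1) + e = p := by
      rw [← Nat.mul_succ, Nat.succ_eq_add_one, Nat.sub_add_cancel (Nat.pos_of_ne_zero ht)]
      exact hd
    have h3 : p - 1 = (e-1) + e * (p/e - 1) := by
      have key : ∀ A, A + e = p → p - 1 = (e-1) + A := by intro A hA; omega
      exact key _ h2
    rw [h3, Nat.add_mul_mod_self_left]
    exact Nat.mod_eq_of_lt (by omega)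
  · have h3 : p - 1 = (i-1) + e * (p/e) := by
      have key : ∀ A, A + i = p → p - 1 = (i-1) + A := by intro A hA; omega
      exact key _ hd
    rw [h3, Nat.add_mul_mod_self_left]
    exact Nat.mod_eq_of_lt (by omega)

lemma pred_div (he : 2 ≤ e) {q : ℕ} (hq0 : q ≠ 0) :
    (q-1)/e + (if q % e = 0 then 1 else 0) = q / e := by
  have hd : e * (q / e) + q % e = q := Nat.div_add_mod q e
  have hml : q % e < e := Nat.mod_lt q (show 0 < e by omega)
  split_ifs with h
  · rw [h, Nat.add_zero] at hd
    have ht : q / e ≠ 0 := by rintro h0; rw [h0, Nat.mul_zero] at hd; exact hq0 hd.symm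
    have h2 : e * (q/e - 1) + e = q := by
      rw [← Nat.mul_succ, Nat.succ_eq_add_one, Nat.sub_add_cancel (Nat.pos_of_ne_zero ht)]
      exact hd
    have h3 : q - 1 = e * (q/e - 1) + (e-1) := by
      have key : ∀ A, A + e = q → q - 1 = A + (e-1) := by intro A hA; omega
      exact key _ h2
    rw [h3, Nat.mul_add_div (show 0 < e by omega), Nat.div_eq_of_lt (show e-1 < e by omega),
      Nat.add_zero, Nat.sub_add_cancel (Nat.pos_of_ne_zero ht)]
  · have h3 : q - 1 = e * (q/e) + (q % e - 1) := by
      have key : ∀ A r, A + r = q → r ≠ 0 → q - 1 = A + (r - 1) := by intro A r hA hr; omega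
      exact key _ _ hd h
    rw [h3, Nat.mul_add_div (show 0 < e by omega),
      Nat.div_eq_of_lt (show q % e - 1 < e by omega)]
    omega

lemma card_range_mod (he : 0 < e) (p : ℕ) :
    ((Finset.range p).filter (fun q => q % e = p % e)).card = p / e := by
  rw [← Finset.card_range (p / e)]
  apply Finset.card_nbij' (fun q => q / e) (fun t => p % e + t * e)
  · intro q hq
    simp only [Finset.mem_coe, Finset.mem_filter, Finset.mem_range] at hq ⊢
    obtain ⟨hqp, hqm⟩ := hq
    have hdvd : e ∣ p - q := (Nat.modEq_iff_dvd' (le_of_lt hqp)).mp hqm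
    have hle : e ≤ p - q := Nat.le_of_dvd (by omega) hdvd
    have h1 : (q + e) / e ≤ p / e := Nat.div_le_div_right (by omega)
    rw [Nat.add_div_right q he] at h1
    omega
  · intro t ht
    simp only [Finset.mem_coe, Finset.mem_filter, Finset.mem_range] at ht ⊢
    constructor
    · have h1 : (t+1) * e ≤ (p/e) * e := Nat.mul_le_mul_right e (by omega)
      have h2 : p / e * e ≤ p := Nat.div_mul_le_self p e
      have h3 : p % e < e := Nat.mod_lt p he
      calc p % e + t * e < p % e + (t+1) * e := by rw [Nat.succ_mul]; omega
        _ ≤ p % e + p / e * e := by omega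
        _ = p := Nat.mod_add_div' p e
    · rw [Nat.add_mul_mod_self_right]
      exact Nat.mod_mod_of_dvd p dvd_rfl
  · intro q hq
    simp only [Finset.mem_coe, Finset.mem_filter, Finset.mem_range] at hq
    rw [← hq.2]
    exact Nat.mod_add_div' q e
  · intro t ht
    dsimp only
    rw [Nat.add_mul_div_right _ _ he, Nat.div_eq_of_lt (Nat.mod_lt p he)]
    omega

end Helpers

section Weight
variable {e : ℕ}

lemma pairsIn_eq : ∀ (n : ℕ) (S : Finset ℕ), S.card = n →
    (∑ p ∈ S, (S.filter (· < p)).card) = n.choose 2 := by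
  intro n
  induction n with
  | zero =>
      intro S hS
      rw [Finset.card_eq_zero] at hS
      subst hS; simp
  | succ n ih =>
      intro S hS
      have hne : S.Nonempty := by rw [← Finset.card_pos, hS]; omega
      set M := S.max' hne with hM
      have hMS : M ∈ S := S.max'_mem hne
      have hfM : S.filter (· < M) = S.erase M := by
        ext x
        simp only [Finset.mem_filter, Finset.mem_erase]
        constructor
        · rintro ⟨hx, hlt⟩; exact ⟨ne_of_lt hlt, hx⟩
        · rintro ⟨hne', hx⟩; exact ⟨hx, lt_of_le_of_ne (S.le_max' x hx) hne'⟩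
      have hcard : (S.erase M).card = n := by rw [Finset.card_erase_of_mem hMS, hS]; rfl
      have hsum : ∑ p ∈ S, (S.filter (· < p)).card
          = (S.filter (· < M)).card + ∑ p ∈ S.erase M, (S.filter (· < p)).card :=
        (Finset.add_sum_erase S _ hMS).symm
      have hcongr : ∀ p ∈ S.erase M, (S.filter (· < p)).card = ((S.erase M).filter (· < p)).card := by
        intro p hp
        rw [Finset.mem_erase] at hp
        have hpM : p < M := lt_of_le_of_ne (S.le_max' p hp.2) hp.1
        congr 1
        ext x
        simp only [Finset.mem_filter, Finset.mem_erase]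
        constructor
        · rintro ⟨hx, hlt⟩; exact ⟨⟨by omega, hx⟩, hlt⟩
        · rintro ⟨⟨_, hx⟩, hlt⟩; exact ⟨hx, hlt⟩
      rw [hsum, hfM, hcard, Finset.sum_congr rfl hcongr, ih _ hcard, choose2_succ]
      omega

lemma weight_eq (he : 0 < e) (B : Finset ℕ) :
    abacusWeight e B + ∑ c ∈ Finset.range e, ((B.filter (fun p => p % e = c)).card).choose 2
      = ∑ p ∈ B, p / e := by
  have hbead : ∀ p : ℕ, beadWeight e B p + (B.filter (fun q => q % e = p % e ∧ q < p)).card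
      = p / e := by
    intro p
    have hsp : (B.filter (fun q => q % e = p % e ∧ q < p))
        = ((Finset.range p).filter (fun q => q % e = p % e)).filter (fun q => q ∈ B) := by
      rw [Finset.filter_filter]
      ext x
      simp only [Finset.mem_filter, Finset.mem_range]
      tauto
    have hbw : beadWeight e B p
        = (((Finset.range p).filter (fun q => q % e = p % e)).filter (fun q => ¬ q ∈ B)).card := by
      rw [Finset.filter_filter]
      rfl
    rw [hsp, hbw, Nat.add_comm, Finset.card_filter_add_card_filter_not,
      card_range_mod he]
  have hsum : abacusWeight e B + ∑ p ∈ B, (B.filter (fun q => q % e = p % e ∧ q < p)).card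
      = ∑ p ∈ B, p / e := by
    rw [abacusWeight, ← Finset.sum_add_distrib]
    exact Finset.sum_congr rfl (fun p _ => hbead p)
  have hfib : ∑ c ∈ Finset.range e, ∑ p ∈ B.filter (fun p => p % e = c),
        (B.filter (fun q => q % e = p % e ∧ q < p)).card
      = ∑ p ∈ B, (B.filter (fun q => q % e = p % e ∧ q < p)).card :=
    Finset.sum_fiberwise_of_maps_to (fun p _ => Finset.mem_range.mpr (Nat.mod_lt p he)) _
  have hinner : ∀ c ∈ Finset.range e, ∑ p ∈ B.filter (fun p => p % e = c),
        (B.filter (fun q => q % e = p % e ∧ q < p)).card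
      = ((B.filter (fun p => p % e = c)).card).choose 2 := by
    intro c _
    rw [← pairsIn_eq ((B.filter (fun p => p % e = c)).card) _ rfl]
    apply Finset.sum_congr rfl
    intro p hp
    rw [Finset.mem_filter] at hp
    congr 1
    ext x
    simp only [Finset.mem_filter]
    rw [hp.2]
    tauto
  rw [← hsum, ← hfib, Finset.sum_congr rfl hinner]

end Weight

section Automaton
variable (B : Finset ℕ)

lemma step_len (st : List ℕ × List ℕ) (p : ℕ) :
    (signStep B st p).1.length + st.2.length + (if p ∈ B ∧ ¬(p = 0 ∨ p - 1 ∈ B) then 1 else 0)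
      = st.1.length + (signStep B st p).2.length
        + (if p ∉ B ∧ (p = 0 ∨ p - 1 ∈ B) then 1 else 0) := by
  obtain ⟨s1, s2⟩ := st
  unfold signStep
  by_cases h1 : p ∈ B ∧ ¬(p = 0 ∨ p - 1 ∈ B)
  · have h2 : ¬(p ∉ B ∧ (p = 0 ∨ p - 1 ∈ B)) := by tauto
    rw [if_pos h1, if_pos h1, if_neg h2]
    simp only [List.length_cons]
    omega
  · rw [if_neg h1, if_neg h1]
    by_cases h2 : p ∉ B ∧ (p = 0 ∨ p - 1 ∈ B)
    · rw [if_pos h2, if_pos h2]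
      cases s2 <;> simp only [List.length_cons, List.length_nil] <;> omega
    · rw [if_neg h2, if_neg h2]

lemma foldl_len : ∀ (l : List ℕ) (st : List ℕ × List ℕ),
    (l.foldl (signStep B) st).1.length + st.2.length
        + l.countP (fun p => decide (p ∈ B ∧ ¬(p = 0 ∨ p - 1 ∈ B)))
      = st.1.length + (l.foldl (signStep B) st).2.length
        + l.countP (fun p => decide (p ∉ B ∧ (p = 0 ∨ p - 1 ∈ B)))
  | [], st => by simp
  | p :: l, st => by
    have h1 := step_len B st p
    have h2 := foldl_len (p :: l).tail (signStep B st p)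
    simp only [List.foldl_cons, List.countP_cons, List.tail_cons, decide_eq_true_eq] at *
    omega

lemma count_eq : ∀ l : List ℕ,
    l.countP (fun p => decide (p ∉ B ∧ (p = 0 ∨ p - 1 ∈ B)))
        + l.countP (fun p => decide (p ∈ B))
      = l.countP (fun p => decide (p ∈ B ∧ ¬(p = 0 ∨ p - 1 ∈ B)))
        + l.countP (fun p => decide (p = 0 ∨ p - 1 ∈ B)) := by
  intro l
  induction l with
  | nil => simp
  | cons p l ih =>
      simp only [List.countP_cons, decide_eq_true_eq]
      by_cases hp : p ∈ B <;> by_cases hl : (p = 0 ∨ p - 1 ∈ B) <;>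
        simp only [hp, hl, not_true, not_false_iff, true_and, false_and, and_true, and_false,
          if_true, if_false] <;> omega

lemma countP_range (f : ℕ → Bool) : ∀ N : ℕ,
    (List.range N).countP f = ((Finset.range N).filter (fun n => f n = true)).card := by
  intro N
  induction N with
  | zero => simp
  | succ n ih =>
      rw [List.range_succ, List.countP_append, Finset.range_add_one, Finset.filter_insert]
      have hn : n ∉ (Finset.range n).filter (fun m => f m = true) := by
        simp [Finset.mem_filter]
      by_cases h : f n = true
      · rw [if_pos h, Finset.card_insert_of_notMem hn, ih]
        simp [h]
      · rw [if_neg h, ih]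
        simp [h]

lemma stack_spec (e i : ℕ) : ∀ (l : List ℕ) (st : List ℕ × List ℕ),
    l.Pairwise (· < ·) → (∀ p ∈ l, p % e = i) →
    st.2.Pairwise (· > ·) →
    (∀ q ∈ st.2, q ∈ B ∧ q ≠ 0 ∧ q - 1 ∉ B ∧ q % e = i) →
    (∀ q ∈ st.2, ∀ p ∈ l, q < p) →
    (l.foldl (signStep B) st).2.Pairwise (· > ·) ∧
      ∀ q ∈ (l.foldl (signStep B) st).2, q ∈ B ∧ q ≠ 0 ∧ q - 1 ∉ B ∧ q % e = i
  | [], st => by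
    intro _ _ h3 h4 _
    exact ⟨h3, h4⟩
  | p :: l, st => by
    intro hpw hres hsort hQ hlt
    rw [List.foldl_cons]
    have hplt : ∀ p' ∈ l, p < p' := by
      intro p' hp'
      exact List.rel_of_pairwise_cons hpw hp'
    apply stack_spec e i l (signStep B st p) (hpw.of_cons) (fun q hq => hres q (List.mem_cons_of_mem _ hq))
    · -- new stack pairwise (>)
      obtain ⟨s1, s2⟩ := st
      unfold signStep
      by_cases h1 : p ∈ B ∧ ¬(p = 0 ∨ p - 1 ∈ B)
      · rw [if_pos h1]
        exact List.pairwise_cons.mpr ⟨fun q hq => hlt q hq p List.mem_cons_self, hsort⟩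
      · rw [if_neg h1]
        by_cases h2 : p ∉ B ∧ (p = 0 ∨ p - 1 ∈ B)
        · rw [if_pos h2]
          cases s2 with
          | nil => simp
          | cons q tl => exact (List.pairwise_cons.mp hsort).2
        · rw [if_neg h2]; exact hsort
    · -- Q for new stack
      obtain ⟨s1, s2⟩ := st
      unfold signStep
      by_cases h1 : p ∈ B ∧ ¬(p = 0 ∨ p - 1 ∈ B)
      · rw [if_pos h1]
        intro q hq
        rcases List.mem_cons.mp hq with rfl | hq'
        · push_neg at h1
          exact ⟨h1.1, h1.2.1, h1.2.2, hres q List.mem_cons_self⟩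
        · exact hQ q hq'
      · rw [if_neg h1]
        by_cases h2 : p ∉ B ∧ (p = 0 ∨ p - 1 ∈ B)
        · rw [if_pos h2]
          cases s2 with
          | nil => simp
          | cons q tl => exact fun q' hq' => hQ q' (List.mem_cons_of_mem _ hq')
        · rw [if_neg h2]; exact hQ
    · -- hlt for new stack
      obtain ⟨s1, s2⟩ := st
      unfold signStep
      by_cases h1 : p ∈ B ∧ ¬(p = 0 ∨ p - 1 ∈ B)
      · rw [if_pos h1]
        intro q hq p' hp'
        rcases List.mem_cons.mp hq with rfl | hq'
        · exact hplt p' hp'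
        · exact hlt q hq' p' (List.mem_cons_of_mem _ hp')
      · rw [if_neg h1]
        by_cases h2 : p ∉ B ∧ (p = 0 ∨ p - 1 ∈ B)
        · rw [if_pos h2]
          cases s2 with
          | nil => simp
          | cons q tl =>
              exact fun q' hq' p' hp' =>
                hlt q' (List.mem_cons_of_mem _ hq') p' (List.mem_cons_of_mem _ hp')
        · rw [if_neg h2]
          exact fun q hq p' hp' => hlt q hq p' (List.mem_cons_of_mem _ hp')

end Automaton

section MoveDown

lemma moveDown_eq : ∀ (T : List ℕ) (B : Finset ℕ),
    T.Nodup → (∀ p ∈ T, p ∈ B) → (∀ p ∈ T, p - 1 ∉ B) →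
    (∀ p ∈ T, ∀ q ∈ T, p - 1 ≠ q) → (∀ p ∈ T, ∀ q ∈ T, p ≠ q → p - 1 ≠ q - 1) →
    moveDown B T = (B \ T.toFinset) ∪ T.toFinset.image (· - 1)
  | [], B => by intro _ _ _ _ _; simp [moveDown]
  | p :: T, B => by
    intro hnd h1 h2 h3 h4
    have hmem : p ∈ p :: T := List.mem_cons_self
    have hpT : p ∉ T := (List.nodup_cons.mp hnd).1
    have key : moveDown B (p :: T) = moveDown (insert (p-1) (B.erase p)) T := rfl
    rw [key, moveDown_eq T (insert (p-1) (B.erase p)) (List.nodup_cons.mp hnd).2]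
    · ext x
      simp only [Finset.mem_union, Finset.mem_sdiff, Finset.mem_insert, Finset.mem_erase,
        Finset.mem_image, List.toFinset_cons, List.mem_toFinset]
      have hp1T : ∀ q ∈ T, p - 1 ≠ q := fun q hq => h3 p hmem q (List.mem_cons_of_mem _ hq)
      constructor
      · rintro (⟨(rfl | ⟨hxp, hxB⟩), hxT⟩ | ⟨q, hq, rfl⟩)
        · right; exact ⟨p, Or.inl rfl, rfl⟩
        · left; exact ⟨hxB, by tauto⟩
        · right; exact ⟨q, Or.inr hq, rfl⟩
      · rintro (⟨hxB, hx⟩ | ⟨q, (rfl | hq), rfl⟩)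
        · push_neg at hx
          left
          exact ⟨Or.inr ⟨hx.1, hxB⟩, hx.2⟩
        · left
          exact ⟨Or.inl rfl, fun hc => hp1T _ hc rfl⟩
        · right; exact ⟨q, hq, rfl⟩
    · intro q hq
      have hqm : q ∈ p :: T := List.mem_cons_of_mem _ hq
      have : q ≠ p := fun h => hpT (h ▸ hq)
      have : q ≠ p - 1 := fun h => h3 p hmem q hqm h.symm
      simp only [Finset.mem_insert, Finset.mem_erase]
      right
      exact ⟨‹q ≠ p›, h1 q hqm⟩
    · intro q hq
      have hqm : q ∈ p :: T := List.mem_cons_of_mem _ hq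
      have hq1 : q - 1 ≠ p - 1 := h4 q hqm p hmem (fun h => hpT (h ▸ hq))
      have hq2 : q - 1 ≠ p := h3 q hqm p hmem
      simp only [Finset.mem_insert, Finset.mem_erase]
      rintro (hc | ⟨_, hc⟩)
      · exact hq1 hc
      · exact h2 q hqm hc
    · exact fun a ha q hq => h3 a (List.mem_cons_of_mem _ ha) q (List.mem_cons_of_mem _ hq)
    · exact fun a ha q hq => h4 a (List.mem_cons_of_mem _ ha) q (List.mem_cons_of_mem _ hq)

end MoveDown

section Main

/-- The key count identity: `φ + a = ε + (b + δ)`. -/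
lemma phi_eps_count (e : ℕ) (he : 2 ≤ e) (B : Finset ℕ) (i : ℕ) (hi : i < e) :
    phiB e B i + (B.filter (fun p => p % e = i)).card
      = epsB e B i + ((B.filter (fun p => p % e = (i + e - 1) % e)).card
          + (if i = 0 then 1 else 0)) := by
  have he0 : 0 < e := by omega
  set N := B.sup id + e + 2 with hNdef
  have hNlt : ∀ p ∈ B, p + 1 < N := by
    intro p hp
    have := Finset.le_sup (f := id) hp
    simp only [id] at this
    omega
  have hN0 : 0 < N := by omega
  set l := posList e B i with hldef
  have hfold := foldl_len B l ([], [])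
  have hcnt := count_eq B l
  -- identify the two remaining counts
  have hinB : l.countP (fun p => decide (p ∈ B)) = (B.filter (fun p => p % e = i)).card := by
    rw [hldef, posList, List.countP_filter, countP_range]
    congr 1
    ext x
    simp only [Finset.mem_filter, Finset.mem_range, Bool.and_eq_true, decide_eq_true_eq,
      beq_iff_eq]
    constructor
    · rintro ⟨_, hxB, hxi⟩; exact ⟨hxB, hxi⟩
    · rintro ⟨hxB, hxi⟩; exact ⟨by have := hNlt x hxB; omega, hxB, hxi⟩
  have hleft : l.countP (fun p => decide (p = 0 ∨ p - 1 ∈ B))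
      = (if i = 0 then 1 else 0)
        + (B.filter (fun p => p % e = (i + e - 1) % e)).card := by
    rw [hldef, posList, List.countP_filter, countP_range]
    have hsplit : (Finset.range N).filter (fun p => (decide (p = 0 ∨ p - 1 ∈ B) && (p % e == i)) = true)
        = ((Finset.range N).filter (fun p => p = 0 ∧ p % e = i))
          ∪ ((Finset.range N).filter (fun p => p ≠ 0 ∧ p - 1 ∈ B ∧ p % e = i)) := by
      ext x
      simp only [Finset.mem_union, Finset.mem_filter, Finset.mem_range, Bool.and_eq_true,
        decide_eq_true_eq, beq_iff_eq]
      by_cases hx0 : x = 0 <;> tauto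
    have hdisj2 : Disjoint ((Finset.range N).filter (fun p => p = 0 ∧ p % e = i))
        ((Finset.range N).filter (fun p => p ≠ 0 ∧ p - 1 ∈ B ∧ p % e = i)) := by
      rw [Finset.disjoint_left]
      intro x hx hx'
      rw [Finset.mem_filter] at hx hx'
      exact hx'.2.1 hx.2.1
    have hc0 : ((Finset.range N).filter (fun p => p = 0 ∧ p % e = i)).card
        = (if i = 0 then 1 else 0) := by
      split_ifs with h
      · subst h
        have : (Finset.range N).filter (fun p => p = 0 ∧ p % e = 0) = {0} := by
          ext x
          simp only [Finset.mem_filter, Finset.mem_range, Finset.mem_singleton]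
          constructor
          · rintro ⟨_, rfl, _⟩; rfl
          · rintro rfl; exact ⟨hN0, rfl, Nat.zero_mod e⟩
        rw [this]; rfl
      · have : (Finset.range N).filter (fun p => p = 0 ∧ p % e = i) = ∅ := by
          ext x
          simp only [Finset.mem_filter, Finset.mem_range, Finset.notMem_empty, iff_false]
          rintro ⟨_, rfl, hx⟩
          rw [Nat.zero_mod] at hx
          exact h hx.symm
        rw [this]; rfl
    have hc1 : ((Finset.range N).filter (fun p => p ≠ 0 ∧ p - 1 ∈ B ∧ p % e = i)).card
        = (B.filter (fun p => p % e = (i + e - 1) % e)).card := by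
      apply Finset.card_nbij' (fun p => p - 1) (fun q => q + 1)
      · intro p hp
        rw [Finset.mem_coe, Finset.mem_filter] at hp ⊢
        obtain ⟨_, hp0, hpB, hpi⟩ := hp
        exact ⟨hpB, pred_mod_eq he hi hpi hp0⟩
      · intro q hq
        rw [Finset.mem_coe, Finset.mem_filter] at hq ⊢
        obtain ⟨hqB, hqi⟩ := hq
        refine ⟨Finset.mem_range.mpr (hNlt q hqB), by dsimp only; omega, by simpa using hqB, ?_⟩
        exact succ_mod_eq he hi hqi
      · intro p hp
        rw [Finset.mem_coe, Finset.mem_filter] at hp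
        dsimp only
        omega
      · intro q _
        dsimp only
        omega
    rw [hsplit, Finset.card_union_of_disjoint hdisj2, hc0, hc1]
  have hphi : (l.foldl (signStep B) ([], [])).1.length = phiB e B i := rfl
  have heps : (l.foldl (signStep B) ([], [])).2.length = epsB e B i := rfl
  have h01 : (([], []) : List ℕ × List ℕ).1.length = 0 := rfl
  have h02 : (([], []) : List ℕ × List ℕ).2.length = 0 := rfl
  rw [hphi, heps, h01] at hfold
  clear h02
  omega

theorem main_weight (e : ℕ) (he : 2 ≤ e) (B : Finset ℕ) (i : ℕ) (hi : i < e) :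
    abacusWeight e (Etil e B i (epsB e B i)) + (epsB e B i) * (phiB e B i)
      = abacusWeight e B := by
  have he0 : 0 < e := by omega
  set ε := epsB e B i with hεdef
  set φ := phiB e B i with hφdef
  set δ := (if i = 0 then 1 else 0 : ℕ) with hδdef
  set a := (B.filter (fun p => p % e = i)).card with hadef
  set b := (B.filter (fun p => p % e = (i + e - 1) % e)).card with hbdef
  have hii' : (i + e - 1) % e ≠ i := by
    rw [ipred_val (by omega) hi]; split_ifs with h <;> omega
  have hφa : φ + a = ε + (b + δ) := phi_eps_count e he B i hi
  -- normal list properties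
  have hposres : ∀ p ∈ posList e B i, p % e = i := by
    intro p hp
    rw [posList, List.mem_filter] at hp
    exact eq_of_beq hp.2
  have hpossort : (posList e B i).Pairwise (· < ·) :=
    List.pairwise_lt_range.filter _
  have hstack := stack_spec B e i (posList e B i) ([], []) hpossort hposres
    (by simp) (by simp) (by simp)
  have hNL1 : (normalList e B i).Pairwise (· > ·) := hstack.1
  have hNL2 : ∀ q ∈ normalList e B i, q ∈ B ∧ q ≠ 0 ∧ q - 1 ∉ B ∧ q % e = i := hstack.2
  set T := (normalList e B i).reverse with hTdef
  have hTmem : ∀ q ∈ T, q ∈ B ∧ q ≠ 0 ∧ q - 1 ∉ B ∧ q % e = i := by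
    intro q hq
    exact hNL2 q (List.mem_reverse.mp hq)
  have hTnd : T.Nodup := List.nodup_reverse.mpr (List.Pairwise.imp (fun h => Nat.ne_of_gt h) hNL1)
  have hTlen : T.length = ε := by rw [hTdef, List.length_reverse]; rfl
  have htake : T.take ε = T := by rw [← hTlen]; exact List.take_length
  -- the move
  have hmd : Etil e B i ε = (B \ T.toFinset) ∪ T.toFinset.image (· - 1) := by
    rw [Etil, ← hTdef, htake]
    apply moveDown_eq T B hTnd (fun p hp => (hTmem p hp).1) (fun p hp => (hTmem p hp).2.2.1)
    · intro p hp q hq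
      have h1 : (p - 1) % e = (i + e - 1) % e :=
        pred_mod_eq he hi (hTmem p hp).2.2.2 (hTmem p hp).2.1
      intro hc
      rw [hc, (hTmem q hq).2.2.2] at h1
      exact hii' h1.symm
    · intro p hp q hq hne
      have hp0 := (hTmem p hp).2.1
      have hq0 := (hTmem q hq).2.1
      omega
  set S := T.toFinset with hSdef
  set S' := S.image (· - 1) with hS'def
  have hSmem : ∀ q ∈ S, q ∈ B ∧ q ≠ 0 ∧ q - 1 ∉ B ∧ q % e = i := by
    intro q hq
    exact hTmem q (List.mem_toFinset.mp hq)
  have hSsubB : S ⊆ B := fun q hq => (hSmem q hq).1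
  have hScard : S.card = ε := by rw [hSdef, List.toFinset_card_of_nodup hTnd, hTlen]
  have hinj : ∀ x ∈ S, ∀ y ∈ S, x - 1 = y - 1 → x = y := by
    intro x hx y hy hxy
    have := (hSmem x hx).2.1
    have := (hSmem y hy).2.1
    omega
  have hS'mem : ∀ x ∈ S', x ∉ B ∧ x % e = (i + e - 1) % e := by
    intro x hx
    rw [hS'def, Finset.mem_image] at hx
    obtain ⟨q, hq, rfl⟩ := hx
    obtain ⟨hqB, hq0, hq1, hqi⟩ := hSmem q hq
    exact ⟨hq1, pred_mod_eq he hi hqi hq0⟩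
  have hS'card : S'.card = ε := by rw [hS'def, Finset.card_image_of_injOn hinj, hScard]
  have hSsub : S ⊆ B.filter (fun p => p % e = i) := by
    intro q hq
    rw [Finset.mem_filter]
    exact ⟨(hSmem q hq).1, (hSmem q hq).2.2.2⟩
  have hka : ε ≤ a := by rw [← hScard, hadef]; exact Finset.card_le_card hSsub
  have hdisj : Disjoint (B \ S) S' := by
    rw [Finset.disjoint_right]
    intro x hx
    simp only [Finset.mem_sdiff, not_and]
    intro hxB
    exact absurd hxB (hS'mem x hx).1
  -- row sums
  have hR : (∑ p ∈ (B \ S) ∪ S', p / e) + ε * δ = ∑ p ∈ B, p / e := by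
    rw [Finset.sum_union hdisj]
    have h1 : (∑ x ∈ S', x / e) + ε * δ = ∑ q ∈ S, q / e := by
      rw [hS'def, Finset.sum_image hinj]
      have h2 : ∀ q ∈ S, (q - 1) / e + δ = q / e := by
        intro q hq
        obtain ⟨_, hq0, _, hqi⟩ := hSmem q hq
        have := pred_div he hq0
        rw [hqi] at this
        rw [hδdef, ← this]
      calc (∑ q ∈ S, (q-1) / e) + ε * δ = ∑ q ∈ S, ((q-1) / e + δ) := by
            rw [Finset.sum_add_distrib, Finset.sum_const, hScard, smul_eq_mul]
        _ = ∑ q ∈ S, q / e := Finset.sum_congr rfl h2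
    have h3 : (∑ p ∈ B \ S, p / e) + ∑ q ∈ S, q / e = ∑ p ∈ B, p / e :=
      Finset.sum_sdiff hSsubB
    omega
  -- runner counts
  have hfa : ((B \ S) ∪ S').filter (fun p => p % e = i)
      = (B.filter (fun p => p % e = i)) \ S := by
    ext x
    simp only [Finset.mem_filter, Finset.mem_union, Finset.mem_sdiff]
    constructor
    · rintro ⟨hx | hx, hxi⟩
      · exact ⟨⟨hx.1, hxi⟩, hx.2⟩
      · exact absurd (hxi.symm.trans (hS'mem x hx).2) hii'.symm
    · rintro ⟨⟨hxB, hxi⟩, hxS⟩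
      exact ⟨Or.inl ⟨hxB, hxS⟩, hxi⟩
  have hfb : ((B \ S) ∪ S').filter (fun p => p % e = (i + e - 1) % e)
      = (B.filter (fun p => p % e = (i + e - 1) % e)) ∪ S' := by
    ext x
    simp only [Finset.mem_filter, Finset.mem_union, Finset.mem_sdiff]
    constructor
    · rintro ⟨hx | hx, hxi⟩
      · exact Or.inl ⟨hx.1, hxi⟩
      · exact Or.inr hx
    · rintro (⟨hxB, hxi⟩ | hx)
      · refine ⟨Or.inl ⟨hxB, ?_⟩, hxi⟩
        intro hxS
        exact hii'.symm (((hSmem x hxS).2.2.2).symm.trans hxi)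
      · exact ⟨Or.inr hx, (hS'mem x hx).2⟩
  have hfc : ∀ c, c ≠ i → c ≠ (i + e - 1) % e →
      ((B \ S) ∪ S').filter (fun p => p % e = c) = B.filter (fun p => p % e = c) := by
    intro c hc1 hc2
    ext x
    simp only [Finset.mem_filter, Finset.mem_union, Finset.mem_sdiff]
    constructor
    · rintro ⟨hx | hx, hxi⟩
      · exact ⟨hx.1, hxi⟩
      · exact absurd (hxi.symm.trans (hS'mem x hx).2) hc2
    · rintro ⟨hxB, hxi⟩
      refine ⟨Or.inl ⟨hxB, fun hxS => ?_⟩, hxi⟩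
      exact hc1 (hxi.symm.trans (hSmem x hxS).2.2.2)
  have hfacard : (((B \ S) ∪ S').filter (fun p => p % e = i)).card = a - ε := by
    rw [hfa, Finset.card_sdiff_of_subset hSsub, hScard]
  have hdisjb : Disjoint (B.filter (fun p => p % e = (i + e - 1) % e)) S' := by
    rw [Finset.disjoint_right]
    intro x hx
    rw [Finset.mem_filter, not_and]
    intro hxB
    exact absurd hxB (hS'mem x hx).1
  have hfbcard : (((B \ S) ∪ S').filter (fun p => p % e = (i + e - 1) % e)).card = b + ε := by
    rw [hfb, Finset.card_union_of_disjoint hdisjb, hS'card]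
  -- pairs sums
  have hpt : ∀ c ∈ Finset.range e,
      ((((B \ S) ∪ S').filter (fun p => p % e = c)).card).choose 2
          + (if c = i then a.choose 2 else 0) + (if c = (i + e - 1) % e then b.choose 2 else 0)
        = ((B.filter (fun p => p % e = c)).card).choose 2
          + (if c = i then (a - ε).choose 2 else 0)
          + (if c = (i + e - 1) % e then (b + ε).choose 2 else 0) := by
    intro c _
    by_cases h1 : c = i
    · subst h1
      rw [if_pos rfl, if_pos rfl, if_neg (fun h => hii' h.symm),
        if_neg (fun h => hii' h.symm), hfacard, ← hadef]
      omega
    · by_cases h2 : c = (i + e - 1) % e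
      · subst h2
        rw [if_neg h1, if_neg h1, if_pos rfl, if_pos rfl, hfbcard, ← hbdef]
        omega
      · rw [hfc c h1 h2, if_neg h1, if_neg h1, if_neg h2, if_neg h2]
  have hPsum := Finset.sum_congr rfl hpt
  rw [Finset.sum_add_distrib, Finset.sum_add_distrib, Finset.sum_add_distrib,
    Finset.sum_add_distrib, Finset.sum_ite_eq' (Finset.range e) i,
    Finset.sum_ite_eq' (Finset.range e) ((i + e - 1) % e),
    Finset.sum_ite_eq' (Finset.range e) i,
    Finset.sum_ite_eq' (Finset.range e) ((i + e - 1) % e),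
    if_pos (Finset.mem_range.mpr hi),
    if_pos (Finset.mem_range.mpr (Nat.mod_lt _ he0)),
    if_pos (Finset.mem_range.mpr hi),
    if_pos (Finset.mem_range.mpr (Nat.mod_lt _ he0))] at hPsum
  -- weights
  have hW := weight_eq he0 B
  have hW' := weight_eq he0 ((B \ S) ∪ S')
  -- arithmetic
  have h5 : a.choose 2 = (a - ε).choose 2 + ε.choose 2 + (a - ε) * ε := by
    have h := choose2_add (a - ε) ε
    rw [Nat.sub_add_cancel hka] at h
    exact h
  have h6 : (b + ε).choose 2 = b.choose 2 + ε.choose 2 + b * ε := choose2_add b ε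
  have h7 : ε * φ + ε * a = ε * ε + ε * b + ε * δ := by
    have h := congrArg (ε * ·) hφa
    simp only [Nat.mul_add] at h
    linarith
  have h8 : (a - ε) * ε + ε * ε = ε * a := by
    rw [← Nat.add_mul, Nat.sub_add_cancel hka, Nat.mul_comm]
  have h9 : b * ε = ε * b := Nat.mul_comm b ε
  rw [hmd]
  linarith [hW, hW', hR, hPsum, h5, h6, h7, h8, h9]

end Main

/-- removing all `k = ε_j(μ)` j-normal nodes from a partition of
e-weight `w` yields a partition of e-weight `w − k·l`, where `l = φ_j(μ)`. -/
theorem stmt0 (e : ℕ) (he : 2 ≤ e) (w : ℕ) (mu : AbacusPartition)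
    (hw : eWeight e mu = w) (j : ℕ) (hj : j < e) (k l : ℕ)
    (hk : k = epsP e mu j) (hl : l = phiP e mu j) :
    abacusWeight e (Etil e (mu.betaSet mu.len) ((j + mu.len) % e) k) + k * l = w := by
  subst hw hk hl
  exact main_weight e he (mu.betaSet mu.len) ((j + mu.len) % e) (Nat.mod_lt _ (by omega))
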